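/- arXiv:2112.12732 — 2 statements merged into one kernel-verified Lean document; each statement's English description precedes it below -/
import Mathlib

section
/- For every nonnegative integer n, ∑_{k=0}^{n} C(n,k)²·C(2k,k)·C(2n-2k, n-k) = ∑_{k=0}^{⌊n/2⌋} C(n+k, 3k)·C(2k,k)²·C(3k,k)·4^{n-2k}. -/
open Finset
set_option maxHeartbeats 1000000000

namespace Stmt13

noncomputable section



def T (k b : ℕ) : ℚ := (((k+b).choose k : ℕ) : ℚ)^2 * (((2*k).choose k : ℕ) : ℚ) * (((2*b).choose b : ℕ) : ℚ)
def W (n k : ℚ) : ℚ :=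
  (-224) + (296)*k + (-120)*k^2 + (16)*k^3 + (-864)*n + (948)*n*k + (-312)*n*k^2 + (32)*n*k^3
  + (-1304)*n^2 + (1112)*n^2*k + (-264)*n^2*k^2 + (16)*n^2*k^3 + (-960)*n^3 + (564)*n^3*k
  + (-72)*n^3*k^2 + (-344)*n^4 + (104)*n^4*k + (-48)*n^5
def P1 (n k : ℚ) : ℚ := k^3*(2*n+1-2*k)*(W n k)
def Gp (k b : ℕ) : ℚ := P1 ((k:ℚ)+(b:ℚ)) (k:ℚ) * T k b / (((b:ℚ)+1)^3*((b:ℚ)+2)^3)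
def A2 (n : ℚ) : ℚ := (n+2)^3
def A1 (n : ℚ) : ℚ := -2*(2*n+3)*(5*n^2+15*n+12)
def A0 (n : ℚ) : ℚ := 64*(n+1)^3
def TRq (k b : ℕ) : ℚ := (((3*k+b).choose (3*k) : ℕ) : ℚ) * (((2*k).choose k : ℕ) : ℚ)^2
  * (((3*k).choose k : ℕ) : ℚ) * 4^b
def G2 (k b : ℕ) : ℚ := (-192) * (k:ℚ)^4 * (6*(k:ℚ)+3*(b:ℚ)+4) * TRq k b
  / (((b:ℚ)+1)*((b:ℚ)+2))






def LS (n : ℕ) : ℚ := ∑ k ∈ range (n+1), T k (n-k)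
def RS (n : ℕ) : ℚ := ∑ k ∈ range (n/2+1), TRq k (n-2*k)


lemma ratQ {a b c d : ℕ} (h : a * b = c * d) :
    ((a:ℚ)) * b = (c:ℚ) * d := by exact_mod_cast h

lemma rowstep (a b : ℕ) : (((a+b+1).choose a : ℕ) : ℚ) * ((b:ℚ)+1)
    = (((a+b).choose a : ℕ):ℚ) * ((a:ℚ)+(b:ℚ)+1) := by
  have h := Nat.choose_mul_succ_eq (a+b) a
  rw [show a+b+1-a = b+1 by omega] at h
  have := ratQ h.symm; push_cast at this ⊢; linarith

lemma cent (b : ℕ) : (((2*b+2).choose (b+1) : ℕ) : ℚ) * (((b:ℚ)+1)*((b:ℚ)+1))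
    = (((2*b).choose b : ℕ):ℚ) * ((2*(b:ℚ)+2)*(2*(b:ℚ)+1)) := by
  have h1 := Nat.add_one_mul_choose_eq (2*b+1) b
  have h2 := Nat.add_one_mul_choose_eq (2*b) b
  have h3 : (2*b+1).choose (b+1) = (2*b+1).choose b := by
    have := Nat.choose_symm (n := 2*b+1) (k := b+1) (by omega)
    rw [show 2*b+1-(b+1) = b by omega] at this
    exact this.symm
  rw [h3] at h2
  have h1' := ratQ h1
  have h2' := ratQ h2
  push_cast at h1' h2' ⊢
  nlinarith [h1', h2']

lemma colrow (a b : ℕ) : (((a+b+1).choose (a+1) : ℕ) : ℚ) * ((a:ℚ)+1)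
    = (((a+b).choose a : ℕ):ℚ) * ((a:ℚ)+(b:ℚ)+1) := by
  have h := Nat.add_one_mul_choose_eq (a+b) a
  have := ratQ h
  push_cast at this ⊢
  linarith [this]

-- value lemmas
lemma v1 (a : ℕ) : (((a+1).choose a : ℕ) : ℚ) = (a:ℚ)+1 := by
  rw [Nat.choose_succ_self_right]; push_cast; ring

lemma v2 (a : ℕ) : (((a+2).choose a : ℕ) : ℚ) * 2 = ((a:ℚ)+1)*((a:ℚ)+2) := by
  have h := rowstep a 1
  rw [show a+1+1 = a+2 by omega] at h
  push_cast at h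
  rw [v1] at h
  linarith [h]

lemma v3 (a : ℕ) : (((a+3).choose a : ℕ) : ℚ) * 6 = ((a:ℚ)+1)*((a:ℚ)+2)*((a:ℚ)+3) := by
  have h := rowstep a 2
  rw [show a+2+1 = a+3 by omega] at h
  push_cast at h
  nlinarith [h, v2 a]

lemma eC1 (n : ℕ) : (((2*n+2).choose (n+1) : ℕ) : ℚ)
    = (((2*n).choose n : ℕ):ℚ) * ((2*(n:ℚ)+2)*(2*(n:ℚ)+1)) / (((n:ℚ)+1)*((n:ℚ)+1)) := by
  rw [eq_div_iff (by positivity)]; exact cent n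

lemma eC2 (n : ℕ) : (((2*n+4).choose (n+2) : ℕ) : ℚ)
    = (((2*n).choose n : ℕ):ℚ) * ((2*(n:ℚ)+2)*(2*(n:ℚ)+1)*((2*(n:ℚ)+4)*(2*(n:ℚ)+3)))
      / (((n:ℚ)+1)*((n:ℚ)+1)*(((n:ℚ)+2)*((n:ℚ)+2))) := by
  rw [eq_div_iff (by positivity)]
  have h := cent (n+1)
  rw [show 2*(n+1)+2 = 2*n+4 by omega, show 2*(n+1) = 2*n+2 by omega,
      show (n+1)+1 = n+2 by omega] at h
  push_cast at h
  linear_combination ((n:ℚ)+1)*((n:ℚ)+1)*h + ((2*(n:ℚ)+4)*(2*(n:ℚ)+3))*(cent n)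

lemma eD1 (k : ℕ) : (((3*k+3).choose (k+1) : ℕ) : ℚ)
    = (((3*k).choose k : ℕ):ℚ) * ((3*(k:ℚ)+1)*(3*(k:ℚ)+2)*(3*(k:ℚ)+3))
      / (((k:ℚ)+1)*(2*(k:ℚ)+1)*(2*(k:ℚ)+2)) := by
  rw [eq_div_iff (by positivity)]
  have s1 := colrow k (2*k+2)
  have s2 := rowstep k (2*k+1)
  have s3 := rowstep k (2*k)
  rw [show k+(2*k+2)+1 = 3*k+3 by omega, show k+(2*k+2) = 3*k+2 by omega] at s1
  rw [show k+(2*k+1)+1 = 3*k+2 by omega, show k+(2*k+1) = 3*k+1 by omega] at s2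
  rw [show k+(2*k)+1 = 3*k+1 by omega, show k+(2*k) = 3*k by omega] at s3
  push_cast at s1 s2 s3 ⊢
  linear_combination (2*(k:ℚ)+1)*(2*(k:ℚ)+2)*s1 + (3*(k:ℚ)+3)*(2*(k:ℚ)+1)*s2
    + (3*(k:ℚ)+2)*(3*(k:ℚ)+3)*s3

lemma e2A (n : ℕ) : (((n+2).choose n : ℕ) : ℚ) = ((n:ℚ)+1)*((n:ℚ)+2)/2 := by
  rw [eq_div_iff (by norm_num)]; exact v2 n

lemma e3A (n : ℕ) : (((n+3).choose n : ℕ) : ℚ) = ((n:ℚ)+1)*((n:ℚ)+2)*((n:ℚ)+3)/6 := by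
  rw [eq_div_iff (by norm_num)]; exact v3 n

lemma EdgeL (n : ℕ) :
    A2 (n:ℚ) * T n 2 + A1 (n:ℚ) * T n 1 + A0 (n:ℚ) * T n 0 + Gp n 0
      + A2 (n:ℚ) * T (n+1) 1 + A2 (n:ℚ) * T (n+2) 0 + A1 (n:ℚ) * T (n+1) 0 = 0 := by
  simp only [T, Gp, P1, W, A0, A1, A2,
    show n+2 = n+2 from rfl, show (n+1)+1 = n+2 by omega, show (n+1)+0 = n+1 by omega,
    show (n+2)+0 = n+2 by omega, show n+0 = n by omega,
    show 2*(n+1) = 2*n+2 by omega, show 2*(n+2) = 2*n+4 by omega]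
  rw [e2A, eC1, eC2]
  norm_num [Nat.choose_succ_self_right, Nat.choose_self, show Nat.choose 4 2 = 6 by rfl, show Nat.choose 2 1 = 2 by rfl]
  have h1 : ((n:ℚ)+1) ≠ 0 := by positivity
  have h2 : ((n:ℚ)+2) ≠ 0 := by positivity
  field_simp
  ring


lemma EdgeE (m : ℕ) :
    G2 m 0 + A2 (2*(m:ℚ)) * TRq m 2 + A1 (2*(m:ℚ)) * TRq m 1 + A0 (2*(m:ℚ)) * TRq m 0
      + A2 (2*(m:ℚ)) * TRq (m+1) 0 = 0 := by
  simp only [TRq, G2, A0, A1, A2,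
    show 3*m+0 = 3*m by omega, show 3*m+1 = 3*m+1 from rfl, show 3*m+2 = 3*m+2 from rfl,
    show 3*(m+1)+0 = 3*m+3 by omega, show 3*(m+1) = 3*m+3 by omega,
    show 2*(m+1) = 2*m+2 by omega]
  rw [e2A (3*m), v1 (3*m), eC1 m, eD1 m, Nat.choose_self, Nat.choose_self]
  have h1 : ((m:ℚ)+1) ≠ 0 := by positivity
  have h2 : (2*(m:ℚ)+1) ≠ 0 := by positivity
  push_cast
  field_simp
  ring

lemma EdgeO (m : ℕ) :
    G2 m 1 + A2 (2*(m:ℚ)+1) * TRq m 3 + A1 (2*(m:ℚ)+1) * TRq m 2 + A0 (2*(m:ℚ)+1) * TRq m 1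
      + A2 (2*(m:ℚ)+1) * TRq (m+1) 1 + A1 (2*(m:ℚ)+1) * TRq (m+1) 0 = 0 := by
  simp only [TRq, G2, A0, A1, A2,
    show 3*m+0 = 3*m by omega,
    show 3*(m+1)+1 = 3*m+4 by omega, show 3*(m+1)+0 = 3*m+3 by omega,
    show 3*(m+1) = 3*m+3 by omega, show 2*(m+1) = 2*m+2 by omega]
  rw [show (3*m+4).choose (3*m+3) = ((3*m+3)+1).choose (3*m+3) from rfl]
  rw [e3A (3*m), e2A (3*m), v1 (3*m), v1 (3*m+3), eC1 m, eD1 m]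
  simp only [Nat.choose_self]
  have h1 : ((m:ℚ)+1) ≠ 0 := by positivity
  have h2 : (2*(m:ℚ)+1) ≠ 0 := by positivity
  push_cast
  field_simp
  ring


lemma ratQ1 {a b c d : ℕ} (h : a * b = c * d) :
    ((a:ℚ)) * b = (c:ℚ) * d := by exact_mod_cast h

lemma ID1 (k c : ℕ) :
    A2 ((k:ℚ)+c+1) * T k (c+3) + A1 ((k:ℚ)+c+1) * T k (c+2) + A0 ((k:ℚ)+c+1) * T k (c+1)
      = Gp (k+1) c - Gp k (c+1) := by
  have hR1 : (((k+c+2).choose k : ℕ) : ℚ) * ((c:ℚ)+2) = (((k+c+1).choose k : ℕ):ℚ) * ((k:ℚ)+c+2) := by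
    have h := Nat.choose_mul_succ_eq (k+c+1) k
    rw [show k+c+1+1 = k+c+2 by omega, show k+c+1+1-k = c+2 by omega] at h
    have := ratQ1 h.symm; push_cast at this ⊢; linarith
  have hR2 : (((k+c+3).choose k : ℕ) : ℚ) * ((c:ℚ)+3) = (((k+c+2).choose k : ℕ):ℚ) * ((k:ℚ)+c+3) := by
    have h := Nat.choose_mul_succ_eq (k+c+2) k
    rw [show k+c+2+1 = k+c+3 by omega, show k+c+2+1-k = c+3 by omega] at h
    have := ratQ1 h.symm; push_cast at this ⊢; linarith
  have hR4 : (((k+c+1).choose (k+1) : ℕ) : ℚ) * ((k:ℚ)+1) = (((k+c+1).choose k : ℕ):ℚ) * ((c:ℚ)+1) := by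
    have h := Nat.choose_succ_right_eq (k+c+1) k
    rw [show k+c+1-k = c+1 by omega] at h
    have := ratQ1 h; push_cast at this ⊢; linarith
  have cent' : ∀ b : ℕ, (((2*b+2).choose (b+1) : ℕ) : ℚ) * (((b:ℚ)+1)*((b:ℚ)+1))
      = (((2*b).choose b : ℕ):ℚ) * ((2*(b:ℚ)+2)*(2*(b:ℚ)+1)) := by
    intro b
    have h1 := Nat.add_one_mul_choose_eq (2*b+1) b
    have h2 := Nat.add_one_mul_choose_eq (2*b) b
    have h3 : (2*b+1).choose (b+1) = (2*b+1).choose b := by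
      have := Nat.choose_symm (n := 2*b+1) (k := b+1) (by omega)
      rw [show 2*b+1-(b+1) = b by omega] at this
      exact this.symm
    rw [h3] at h2
    have h1' := ratQ1 h1
    have h2' := ratQ1 h2
    push_cast at h1' h2' ⊢
    nlinarith [h1', h2']
  have hR5 := cent' k
  have hR6 := cent' c
  have hR7 := cent' (c+1)
  have hR8 := cent' (c+2)
  rw [show 2*(c+1)+2 = 2*c+4 by omega, show 2*(c+1) = 2*c+2 by omega,
      show (c+1)+1 = c+2 by omega] at hR7
  rw [show 2*(c+2)+2 = 2*c+6 by omega, show 2*(c+2) = 2*c+4 by omega,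
      show (c+2)+1 = c+3 by omega] at hR8
  push_cast at hR7 hR8
  -- abbreviations
  have hc1 : ((c:ℚ)+1) ≠ 0 := by positivity
  have hc2 : ((c:ℚ)+2) ≠ 0 := by positivity
  have hc3 : ((c:ℚ)+3) ≠ 0 := by positivity
  have hk1 : ((k:ℚ)+1) ≠ 0 := by positivity
  -- solve explicit forms
  have eA1 : (((k+c+2).choose k : ℕ) : ℚ) = (((k+c+1).choose k : ℕ):ℚ) * ((k:ℚ)+c+2) / ((c:ℚ)+2) := by
    field_simp; linarith [hR1]
  have eA2 : (((k+c+3).choose k : ℕ) : ℚ)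
      = (((k+c+1).choose k : ℕ):ℚ) * (((k:ℚ)+c+2) * ((k:ℚ)+c+3)) / (((c:ℚ)+2)*((c:ℚ)+3)) := by
    rw [eq_div_iff (by positivity)]
    have : (((k+c+3).choose k : ℕ) : ℚ) * ((c:ℚ)+3) * ((c:ℚ)+2)
        = (((k+c+1).choose k : ℕ):ℚ) * ((k:ℚ)+c+2) * ((k:ℚ)+c+3) := by
      calc (((k+c+3).choose k : ℕ) : ℚ) * ((c:ℚ)+3) * ((c:ℚ)+2)
          = ((((k+c+2).choose k : ℕ):ℚ) * ((k:ℚ)+c+3)) * ((c:ℚ)+2) := by rw [hR2]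
        _ = ((((k+c+2).choose k : ℕ):ℚ) * ((c:ℚ)+2)) * ((k:ℚ)+c+3) := by ring
        _ = (((k+c+1).choose k : ℕ):ℚ) * ((k:ℚ)+c+2) * ((k:ℚ)+c+3) := by rw [hR1]
    linarith [this]
  have eB : (((k+c+1).choose (k+1) : ℕ) : ℚ) = (((k+c+1).choose k : ℕ):ℚ) * ((c:ℚ)+1) / ((k:ℚ)+1) := by
    field_simp; linarith [hR4]
  have eY1 : (((2*k+2).choose (k+1) : ℕ) : ℚ)
      = (((2*k).choose k : ℕ):ℚ) * ((2*(k:ℚ)+2)*(2*(k:ℚ)+1)) / (((k:ℚ)+1)*((k:ℚ)+1)) := by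
    rw [eq_div_iff (by positivity)]; linarith [hR5]
  have eZ1 : (((2*c+2).choose (c+1) : ℕ) : ℚ)
      = (((2*c).choose c : ℕ):ℚ) * ((2*(c:ℚ)+2)*(2*(c:ℚ)+1)) / (((c:ℚ)+1)*((c:ℚ)+1)) := by
    rw [eq_div_iff (by positivity)]; linarith [hR6]
  have eZ2 : (((2*c+4).choose (c+2) : ℕ) : ℚ)
      = (((2*c).choose c : ℕ):ℚ)
        * ((2*(c:ℚ)+2)*(2*(c:ℚ)+1)*(2*(c:ℚ)+4)*(2*(c:ℚ)+3))
        / (((c:ℚ)+1)*((c:ℚ)+1)*((c:ℚ)+2)*((c:ℚ)+2)) := by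
    rw [eq_div_iff (by positivity)]
    have h7 : (((2*c+4).choose (c+2) : ℕ) : ℚ) * (((c:ℚ)+2)*((c:ℚ)+2))
        = (((2*c+2).choose (c+1) : ℕ):ℚ) * ((2*(c:ℚ)+4)*(2*(c:ℚ)+3)) := by linear_combination hR7
    rw [eZ1] at h7
    field_simp at h7 ⊢
    linarith [h7]
  have eZ3 : (((2*c+6).choose (c+3) : ℕ) : ℚ)
      = (((2*c).choose c : ℕ):ℚ)
        * ((2*(c:ℚ)+2)*(2*(c:ℚ)+1)*(2*(c:ℚ)+4)*(2*(c:ℚ)+3)*(2*(c:ℚ)+6)*(2*(c:ℚ)+5))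
        / (((c:ℚ)+1)*((c:ℚ)+1)*((c:ℚ)+2)*((c:ℚ)+2)*((c:ℚ)+3)*((c:ℚ)+3)) := by
    rw [eq_div_iff (by positivity)]
    have h8 : (((2*c+6).choose (c+3) : ℕ) : ℚ) * (((c:ℚ)+3)*((c:ℚ)+3))
        = (((2*c+4).choose (c+2) : ℕ):ℚ) * ((2*(c:ℚ)+6)*(2*(c:ℚ)+5)) := by linear_combination hR8
    rw [eZ2] at h8
    field_simp at h8 ⊢
    linarith [h8]
  -- unfold and normalize arguments
  simp only [T, Gp, P1, W, A0, A1, A2,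
    show k+(c+3) = k+c+3 by omega, show k+(c+2) = k+c+2 by omega,
    show k+(c+1) = k+c+1 by omega, show (k+1)+c = k+c+1 by omega,
    show 2*(c+3) = 2*c+6 by omega, show 2*(c+2) = 2*c+4 by omega,
    show 2*(c+1) = 2*c+2 by omega, show 2*(k+1) = 2*k+2 by omega]
  rw [eA1, eA2, eB, eY1, eZ1, eZ2, eZ3]
  push_cast
  field_simp
  ring

lemma ratQ' {a b c d : ℕ} (h : a * b = c * d) :
    ((a:ℚ)) * b = (c:ℚ) * d := by exact_mod_cast h

lemma cent2 (b : ℕ) : (((2*b+2).choose (b+1) : ℕ) : ℚ) * (((b:ℚ)+1)*((b:ℚ)+1))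
    = (((2*b).choose b : ℕ):ℚ) * ((2*(b:ℚ)+2)*(2*(b:ℚ)+1)) := by
  have h1 := Nat.add_one_mul_choose_eq (2*b+1) b
  have h2 := Nat.add_one_mul_choose_eq (2*b) b
  have h3 : (2*b+1).choose (b+1) = (2*b+1).choose b := by
    have := Nat.choose_symm (n := 2*b+1) (k := b+1) (by omega)
    rw [show 2*b+1-(b+1) = b by omega] at this
    exact this.symm
  rw [h3] at h2
  have h1' := ratQ' h1
  have h2' := ratQ' h2
  push_cast at h1' h2' ⊢
  nlinarith [h1', h2']

lemma rowstep2 (a b : ℕ) : (((a+b+1).choose a : ℕ) : ℚ) * ((b:ℚ)+1)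
    = (((a+b).choose a : ℕ):ℚ) * ((a:ℚ)+(b:ℚ)+1) := by
  have h := Nat.choose_mul_succ_eq (a+b) a
  rw [show a+b+1-a = b+1 by omega] at h
  have := ratQ' h.symm; push_cast at this ⊢; linarith

lemma colrow2 (a b : ℕ) : (((a+b+1).choose (a+1) : ℕ) : ℚ) * ((a:ℚ)+1)
    = (((a+b).choose a : ℕ):ℚ) * ((a:ℚ)+(b:ℚ)+1) := by
  have h := Nat.add_one_mul_choose_eq (a+b) a
  have := ratQ' h
  push_cast at this ⊢
  linarith [this]

-- X shifts
lemma eX1 (k b : ℕ) : (((3*k+b+1).choose (3*k) : ℕ) : ℚ)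
    = (((3*k+b).choose (3*k) : ℕ):ℚ) * (3*(k:ℚ)+(b:ℚ)+1) / ((b:ℚ)+1) := by
  rw [eq_div_iff (by positivity)]
  have h := rowstep2 (3*k) b
  push_cast at h ⊢; linarith

lemma eX2 (k b : ℕ) : (((3*k+b+2).choose (3*k) : ℕ) : ℚ)
    = (((3*k+b).choose (3*k) : ℕ):ℚ) * ((3*(k:ℚ)+(b:ℚ)+1)*(3*(k:ℚ)+(b:ℚ)+2)) / (((b:ℚ)+1)*((b:ℚ)+2)) := by
  rw [eq_div_iff (by positivity)]
  have h1 := rowstep2 (3*k) b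
  have h2 := rowstep2 (3*k) (b+1)
  rw [show 3*k+(b+1)+1 = 3*k+b+2 by omega, show 3*k+(b+1) = 3*k+b+1 by omega] at h2
  push_cast at h1 h2 ⊢
  linear_combination ((b:ℚ)+1)*h2 + (3*(k:ℚ)+(b:ℚ)+2)*h1

lemma eX3 (k b : ℕ) : (((3*k+b+3).choose (3*k) : ℕ) : ℚ)
    = (((3*k+b).choose (3*k) : ℕ):ℚ)
      * ((3*(k:ℚ)+(b:ℚ)+1)*(3*(k:ℚ)+(b:ℚ)+2)*(3*(k:ℚ)+(b:ℚ)+3)) / (((b:ℚ)+1)*((b:ℚ)+2)*((b:ℚ)+3)) := by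
  rw [eq_div_iff (by positivity)]
  have h2 := eX2 k b
  have h3 := rowstep2 (3*k) (b+2)
  rw [show 3*k+(b+2)+1 = 3*k+b+3 by omega, show 3*k+(b+2) = 3*k+b+2 by omega] at h3
  rw [eq_div_iff (by positivity)] at h2
  push_cast at h2 h3 ⊢
  linear_combination ((b:ℚ)+1)*((b:ℚ)+2)*h3 + (3*(k:ℚ)+(b:ℚ)+3)*h2

lemma eX4 (k b : ℕ) : (((3*k+b+4).choose (3*k) : ℕ) : ℚ)
    = (((3*k+b).choose (3*k) : ℕ):ℚ)
      * ((3*(k:ℚ)+(b:ℚ)+1)*(3*(k:ℚ)+(b:ℚ)+2)*(3*(k:ℚ)+(b:ℚ)+3)*(3*(k:ℚ)+(b:ℚ)+4))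
      / (((b:ℚ)+1)*((b:ℚ)+2)*((b:ℚ)+3)*((b:ℚ)+4)) := by
  rw [eq_div_iff (by positivity)]
  have h3 := eX3 k b
  have h4 := rowstep2 (3*k) (b+3)
  rw [show 3*k+(b+3)+1 = 3*k+b+4 by omega, show 3*k+(b+3) = 3*k+b+3 by omega] at h4
  rw [eq_div_iff (by positivity)] at h3
  push_cast at h3 h4 ⊢
  linear_combination ((b:ℚ)+1)*((b:ℚ)+2)*((b:ℚ)+3)*h4 + (3*(k:ℚ)+(b:ℚ)+4)*h3

lemma eXS (k b : ℕ) : (((3*k+b+3).choose (3*k+3) : ℕ) : ℚ)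
    = (((3*k+b).choose (3*k) : ℕ):ℚ)
      * ((3*(k:ℚ)+(b:ℚ)+1)*(3*(k:ℚ)+(b:ℚ)+2)*(3*(k:ℚ)+(b:ℚ)+3))
      / ((3*(k:ℚ)+1)*(3*(k:ℚ)+2)*(3*(k:ℚ)+3)) := by
  rw [eq_div_iff (by positivity)]
  have h1 := colrow2 (3*k) b
  have h2 := colrow2 (3*k+1) b
  have h3 := colrow2 (3*k+2) b
  rw [show 3*k+1+b+1 = 3*k+b+2 by omega, show 3*k+1+b = 3*k+b+1 by omega,
      show 3*k+1+1 = 3*k+2 by omega] at h2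
  rw [show 3*k+2+b+1 = 3*k+b+3 by omega, show 3*k+2+b = 3*k+b+2 by omega,
      show 3*k+2+1 = 3*k+3 by omega] at h3
  push_cast at h1 h2 h3 ⊢
  linear_combination (3*(k:ℚ)+1)*(3*(k:ℚ)+2)*h3 + (3*(k:ℚ)+1)*(3*(k:ℚ)+(b:ℚ)+3)*h2
    + (3*(k:ℚ)+(b:ℚ)+2)*(3*(k:ℚ)+(b:ℚ)+3)*h1

lemma eY2 (k : ℕ) : (((2*k+2).choose (k+1) : ℕ) : ℚ)
    = (((2*k).choose k : ℕ):ℚ) * ((2*(k:ℚ)+2)*(2*(k:ℚ)+1)) / (((k:ℚ)+1)*((k:ℚ)+1)) := by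
  rw [eq_div_iff (by positivity)]; exact cent2 k

lemma eD1b (k : ℕ) : (((3*k+3).choose (k+1) : ℕ) : ℚ)
    = (((3*k).choose k : ℕ):ℚ) * ((3*(k:ℚ)+1)*(3*(k:ℚ)+2)*(3*(k:ℚ)+3))
      / (((k:ℚ)+1)*(2*(k:ℚ)+1)*(2*(k:ℚ)+2)) := by
  rw [eq_div_iff (by positivity)]
  have s1 := colrow2 k (2*k+2)
  have s2 := rowstep2 k (2*k+1)
  have s3 := rowstep2 k (2*k)
  rw [show k+(2*k+2)+1 = 3*k+3 by omega, show k+(2*k+2) = 3*k+2 by omega] at s1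
  rw [show k+(2*k+1)+1 = 3*k+2 by omega, show k+(2*k+1) = 3*k+1 by omega] at s2
  rw [show k+(2*k)+1 = 3*k+1 by omega, show k+(2*k) = 3*k by omega] at s3
  push_cast at s1 s2 s3 ⊢
  linear_combination (2*(k:ℚ)+1)*(2*(k:ℚ)+2)*s1 + (3*(k:ℚ)+3)*(2*(k:ℚ)+1)*s2
    + (3*(k:ℚ)+2)*(3*(k:ℚ)+3)*s3

lemma ID2 (k b : ℕ) :
    A2 (2*(k:ℚ)+(b:ℚ)+2) * TRq k (b+4) + A1 (2*(k:ℚ)+(b:ℚ)+2) * TRq k (b+3)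
      + A0 (2*(k:ℚ)+(b:ℚ)+2) * TRq k (b+2)
      = G2 (k+1) b - G2 k (b+2) := by
  have hb1 : ((b:ℚ)+1) ≠ 0 := by positivity
  have hb2 : ((b:ℚ)+2) ≠ 0 := by positivity
  have hb3 : ((b:ℚ)+3) ≠ 0 := by positivity
  have hb4 : ((b:ℚ)+4) ≠ 0 := by positivity
  have hk1 : ((k:ℚ)+1) ≠ 0 := by positivity
  have hk2 : (2*(k:ℚ)+1) ≠ 0 := by positivity
  have hk3 : (3*(k:ℚ)+1) ≠ 0 := by positivity
  have hk4 : (3*(k:ℚ)+2) ≠ 0 := by positivity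
  simp only [TRq, G2, A0, A1, A2,
    show 3*k+(b+4) = 3*k+b+4 by omega, show 3*k+(b+3) = 3*k+b+3 by omega,
    show 3*k+(b+2) = 3*k+b+2 by omega,
    show 3*(k+1)+b = 3*k+b+3 by omega, show 3*(k+1) = 3*k+3 by omega,
    show 3*k+3+b = 3*k+b+3 by omega,
    show 2*(k+1) = 2*k+2 by omega]
  rw [eX2 k b, eX3 k b, eX4 k b, eXS k b, eY2 k, eD1b k]
  rw [pow_add, pow_add, pow_add]
  push_cast
  field_simp
  ring

lemma Gp0 (b : ℕ) : Gp 0 b = 0 := by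
  simp [Gp, P1]

lemma G20 (b : ℕ) : G2 0 b = 0 := by
  simp [G2]

lemma recL (n : ℕ) : A2 (n:ℚ) * LS (n+2) + A1 (n:ℚ) * LS (n+1) + A0 (n:ℚ) * LS n = 0 := by
  have h2 : LS (n+2) = (∑ k ∈ range (n+1), T k (n+2-k)) + T (n+1) 1 + T (n+2) 0 := by
    rw [LS, show n+2+1 = (n+1)+1+1 from rfl, sum_range_succ, sum_range_succ,
      show n+2-(n+1) = 1 by omega, show n+2-(n+2) = 0 by omega]
  have h1 : LS (n+1) = (∑ k ∈ range (n+1), T k (n+1-k)) + T (n+1) 0 := by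
    rw [LS, show n+1+1 = (n+1)+1 from rfl, sum_range_succ, show n+1-(n+1) = 0 by omega]
  have key : ∑ k ∈ range (n+1),
        (A2 (n:ℚ) * T k (n+2-k) + A1 (n:ℚ) * T k (n+1-k) + A0 (n:ℚ) * T k (n-k))
      = Gp n 0 + (A2 (n:ℚ) * T n 2 + A1 (n:ℚ) * T n 1 + A0 (n:ℚ) * T n 0) := by
    rw [sum_range_succ, show n+2-n = 2 by omega, show n+1-n = 1 by omega, show n-n = 0 by omega]
    congr 1
    have step : ∀ k ∈ range n,
        A2 (n:ℚ) * T k (n+2-k) + A1 (n:ℚ) * T k (n+1-k) + A0 (n:ℚ) * T k (n-k)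
          = Gp (k+1) (n-(k+1)) - Gp k (n-k) := by
      intro k hk
      have hkn : k < n := mem_range.mp hk
      have ecast : (n:ℚ) = (k:ℚ) + ((n-1-k : ℕ):ℚ) + 1 := by
        have h : k + (n-1-k) + 1 = n := by omega
        exact_mod_cast (congrArg (fun x : ℕ => (x:ℚ)) h).symm
      rw [show n-(k+1) = n-1-k by omega, show n-k = (n-1-k)+1 by omega,
        show n+1-k = (n-1-k)+2 by omega, show n+2-k = (n-1-k)+3 by omega, ecast]
      exact ID1 k (n-1-k)
    rw [sum_congr rfl step, sum_range_sub (fun k => Gp k (n-k)), show n-n = 0 by omega,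
      show n-0 = n by omega, Gp0]
    ring
  rw [h2, h1, LS]
  simp only [mul_add, Finset.mul_sum]
  have hs : ∑ k ∈ range (n+1), A2 (n:ℚ) * T k (n+2-k)
      + (∑ k ∈ range (n+1), A1 (n:ℚ) * T k (n+1-k))
      + (∑ k ∈ range (n+1), A0 (n:ℚ) * T k (n-k))
      = Gp n 0 + (A2 (n:ℚ) * T n 2 + A1 (n:ℚ) * T n 1 + A0 (n:ℚ) * T n 0) := by
    rw [← key, ← sum_add_distrib, ← sum_add_distrib]
  have e := EdgeL n
  linarith [hs, e]

lemma recR (n : ℕ) : A2 (n:ℚ) * RS (n+2) + A1 (n:ℚ) * RS (n+1) + A0 (n:ℚ) * RS n = 0 := by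
  rcases Nat.even_or_odd n with ⟨m, hm⟩ | ⟨m, hm⟩
  · -- n = 2m
    subst hm
    have hn : m + m = 2*m := by omega
    rw [hn] -- might fail; handle casts below
    have d0 : (2*m)/2+1 = m+1 := by omega
    have d1 : (2*m+1)/2+1 = m+1 := by omega
    have d2 : (2*m+2)/2+1 = m+2 := by omega
    have h2 : RS (2*m+2) = (∑ k ∈ range (m+1), TRq k (2*m+2-2*k)) + TRq (m+1) 0 := by
      rw [RS, d2, sum_range_succ, show 2*m+2-2*(m+1) = 0 by omega]
    have h1 : RS (2*m+1) = ∑ k ∈ range (m+1), TRq k (2*m+1-2*k) := by rw [RS, d1]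
    have h0 : RS (2*m) = ∑ k ∈ range (m+1), TRq k (2*m-2*k) := by rw [RS, d0]
    have key : ∑ k ∈ range (m+1),
          (A2 (2*(m:ℚ)) * TRq k (2*m+2-2*k) + A1 (2*(m:ℚ)) * TRq k (2*m+1-2*k)
            + A0 (2*(m:ℚ)) * TRq k (2*m-2*k))
        = G2 m 0 + (A2 (2*(m:ℚ)) * TRq m 2 + A1 (2*(m:ℚ)) * TRq m 1 + A0 (2*(m:ℚ)) * TRq m 0) := by
      rw [sum_range_succ, show 2*m+2-2*m = 2 by omega, show 2*m+1-2*m = 1 by omega,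
        show 2*m-2*m = 0 by omega]
      congr 1
      have step : ∀ k ∈ range m,
          A2 (2*(m:ℚ)) * TRq k (2*m+2-2*k) + A1 (2*(m:ℚ)) * TRq k (2*m+1-2*k)
            + A0 (2*(m:ℚ)) * TRq k (2*m-2*k)
            = G2 (k+1) (2*m-2*(k+1)) - G2 k (2*m-2*k) := by
        intro k hk
        have hkm : k < m := mem_range.mp hk
        have ecast : 2*(m:ℚ) = 2*(k:ℚ) + ((2*m-2*k-2 : ℕ):ℚ) + 2 := by
          have h : 2*k + (2*m-2*k-2) + 2 = 2*m := by omega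
          have := (congrArg (fun x : ℕ => (x:ℚ)) h).symm
          push_cast at this ⊢
          linarith
        rw [show 2*m-2*(k+1) = 2*m-2*k-2 by omega, show 2*m-2*k = (2*m-2*k-2)+2 by omega,
          show 2*m+1-2*k = (2*m-2*k-2)+3 by omega, show 2*m+2-2*k = (2*m-2*k-2)+4 by omega, ecast]
        exact ID2 k (2*m-2*k-2)
      rw [sum_congr rfl step, sum_range_sub (fun k => G2 k (2*m-2*k)), show 2*m-2*m = 0 by omega,
        show 2*m-2*0 = 2*m by omega, G20]
      ring
    push_cast
    rw [h2, h1, h0]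
    simp only [mul_add, Finset.mul_sum]
    have hs : ∑ k ∈ range (m+1), A2 (2*(m:ℚ)) * TRq k (2*m+2-2*k)
        + (∑ k ∈ range (m+1), A1 (2*(m:ℚ)) * TRq k (2*m+1-2*k))
        + (∑ k ∈ range (m+1), A0 (2*(m:ℚ)) * TRq k (2*m-2*k))
        = G2 m 0 + (A2 (2*(m:ℚ)) * TRq m 2 + A1 (2*(m:ℚ)) * TRq m 1 + A0 (2*(m:ℚ)) * TRq m 0) := by
      rw [← key, ← sum_add_distrib, ← sum_add_distrib]
    have e := EdgeE m
    linarith [hs, e]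
  · -- n = 2m+1
    subst hm
    have d0 : (2*m+1)/2+1 = m+1 := by omega
    have d1 : (2*m+2)/2+1 = m+2 := by omega
    have d2 : (2*m+3)/2+1 = m+2 := by omega
    have h2 : RS (2*m+1+2) = (∑ k ∈ range (m+1), TRq k (2*m+3-2*k)) + TRq (m+1) 1 := by
      rw [show 2*m+1+2 = 2*m+3 by omega, RS, d2, sum_range_succ, show 2*m+3-2*(m+1) = 1 by omega]
    have h1 : RS (2*m+1+1) = (∑ k ∈ range (m+1), TRq k (2*m+2-2*k)) + TRq (m+1) 0 := by
      rw [show 2*m+1+1 = 2*m+2 by omega, RS, d1, sum_range_succ, show 2*m+2-2*(m+1) = 0 by omega]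
    have h0 : RS (2*m+1) = ∑ k ∈ range (m+1), TRq k (2*m+1-2*k) := by rw [RS, d0]
    have key : ∑ k ∈ range (m+1),
          (A2 (2*(m:ℚ)+1) * TRq k (2*m+3-2*k) + A1 (2*(m:ℚ)+1) * TRq k (2*m+2-2*k)
            + A0 (2*(m:ℚ)+1) * TRq k (2*m+1-2*k))
        = G2 m 1 + (A2 (2*(m:ℚ)+1) * TRq m 3 + A1 (2*(m:ℚ)+1) * TRq m 2 + A0 (2*(m:ℚ)+1) * TRq m 1) := by
      rw [sum_range_succ, show 2*m+3-2*m = 3 by omega, show 2*m+2-2*m = 2 by omega,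
        show 2*m+1-2*m = 1 by omega]
      congr 1
      have step : ∀ k ∈ range m,
          A2 (2*(m:ℚ)+1) * TRq k (2*m+3-2*k) + A1 (2*(m:ℚ)+1) * TRq k (2*m+2-2*k)
            + A0 (2*(m:ℚ)+1) * TRq k (2*m+1-2*k)
            = G2 (k+1) (2*m+1-2*(k+1)) - G2 k (2*m+1-2*k) := by
        intro k hk
        have hkm : k < m := mem_range.mp hk
        have ecast : 2*(m:ℚ)+1 = 2*(k:ℚ) + ((2*m+1-2*k-2 : ℕ):ℚ) + 2 := by
          have h : 2*k + (2*m+1-2*k-2) + 2 = 2*m+1 := by omega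
          have := (congrArg (fun x : ℕ => (x:ℚ)) h).symm
          push_cast at this ⊢
          linarith
        rw [show 2*m+1-2*(k+1) = 2*m+1-2*k-2 by omega, show 2*m+1-2*k = (2*m+1-2*k-2)+2 by omega,
          show 2*m+2-2*k = (2*m+1-2*k-2)+3 by omega, show 2*m+3-2*k = (2*m+1-2*k-2)+4 by omega, ecast]
        exact ID2 k (2*m+1-2*k-2)
      rw [sum_congr rfl step, sum_range_sub (fun k => G2 k (2*m+1-2*k)),
        show 2*m+1-2*m = 1 by omega, show 2*m+1-2*0 = 2*m+1 by omega, G20]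
      ring
    push_cast
    rw [h2, h1, h0]
    simp only [mul_add, Finset.mul_sum]
    have hs : ∑ k ∈ range (m+1), A2 (2*(m:ℚ)+1) * TRq k (2*m+3-2*k)
        + (∑ k ∈ range (m+1), A1 (2*(m:ℚ)+1) * TRq k (2*m+2-2*k))
        + (∑ k ∈ range (m+1), A0 (2*(m:ℚ)+1) * TRq k (2*m+1-2*k))
        = G2 m 1 + (A2 (2*(m:ℚ)+1) * TRq m 3 + A1 (2*(m:ℚ)+1) * TRq m 2 + A0 (2*(m:ℚ)+1) * TRq m 1) := by
      rw [← key, ← sum_add_distrib, ← sum_add_distrib]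
    have e := EdgeO m
    linarith [hs, e]

lemma base0 : LS 0 = RS 0 := by
  norm_num [LS, RS, T, TRq, sum_range_succ]

lemma base1 : LS 1 = RS 1 := by
  norm_num [LS, RS, T, TRq, sum_range_succ]

lemma LS_eq_RS (n : ℕ) : LS n = RS n := by
  have key : ∀ n : ℕ, LS n = RS n ∧ LS (n+1) = RS (n+1) := by
    intro n
    induction n with
    | zero => exact ⟨base0, base1⟩
    | succ m ih =>
      refine ⟨ih.2, ?_⟩
      have hL := recL m
      have hR := recR m
      rw [ih.1, ih.2] at hL
      have hA : A2 (m:ℚ) ≠ 0 := by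
        simp only [A2]; positivity
      have : A2 (m:ℚ) * LS (m+2) = A2 (m:ℚ) * RS (m+2) := by linarith [hL, hR]
      exact mul_left_cancel₀ hA this
  exact (key n).1


end

end Stmt13

theorem stmt_13 (n : ℕ) :
    ∑ k ∈ Finset.range (n + 1),
        (n.choose k) ^ 2 * ((2 * k).choose k) * ((2 * n - 2 * k).choose (n - k))
      = ∑ k ∈ Finset.range (n / 2 + 1),
        ((n + k).choose (3 * k)) * ((2 * k).choose k) ^ 2 * ((3 * k).choose k) * 4 ^ (n - 2 * k) := by
  have hL : ((∑ k ∈ Finset.range (n + 1),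
        (n.choose k) ^ 2 * ((2 * k).choose k) * ((2 * n - 2 * k).choose (n - k)) : ℕ) : ℚ)
      = Stmt13.LS n := by
    rw [Stmt13.LS]
    push_cast
    refine Finset.sum_congr rfl ?_
    intro k hk
    have hkn : k ≤ n := by have := Finset.mem_range.mp hk; omega
    rw [Stmt13.T, show k+(n-k) = n by omega, show 2*(n-k) = 2*n-2*k by omega]
  have hR : ((∑ k ∈ Finset.range (n / 2 + 1),
        ((n + k).choose (3 * k)) * ((2 * k).choose k) ^ 2 * ((3 * k).choose k) * 4 ^ (n - 2 * k) : ℕ) : ℚ)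
      = Stmt13.RS n := by
    rw [Stmt13.RS]
    push_cast
    refine Finset.sum_congr rfl ?_
    intro k hk
    have hkn : 2*k ≤ n := by have := Finset.mem_range.mp hk; omega
    rw [Stmt13.TRq, show 3*k+(n-2*k) = n+k by omega]
  have h := Stmt13.LS_eq_RS n
  exact_mod_cast hL.trans (h.trans hR.symm)
end

section
/- Let p > 3 be a prime with p ≡ 1 (mod 3). Then C(2p-2, (2p-2)/3)·C(p + (4p-4)/3, 2p-1) ≡ -2p (mod p²). -/
open Finset Nat

lemma aux_asc_prod (n : ℕ) : ∀ m : ℕ, n.ascFactorial m = ∏ i ∈ Finset.range m, (n + i)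
  | 0 => by simp [Nat.ascFactorial]
  | m + 1 => by
      rw [Nat.ascFactorial_succ, Finset.prod_range_succ, aux_asc_prod n m, mul_comm]

lemma aux_choose_p_sub_two (p : ℕ) (hp : p.Prime) :
    ∀ j : ℕ, j ≤ p - 2 → (((p - 2).choose j : ℕ) : ZMod p) = (-1) ^ j * (j + 1) := by
  haveI := Fact.mk hp
  have hp2 : 2 ≤ p := hp.two_le
  intro j
  induction j with
  | zero => simp
  | succ j ih =>
    intro hj
    have ihv := ih (by omega)
    have key := Nat.choose_succ_right_eq (p - 2) j
    have hsub : p - 2 - j + (j + 2) = p := by omega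
    have h0 : ((p : ℕ) : ZMod p) = 0 := ZMod.natCast_self p
    have hcast : ((p - 2 - j : ℕ) : ZMod p) = -((j : ZMod p) + 2) := by
      have h1 := congrArg (Nat.cast : ℕ → ZMod p) hsub
      push_cast at h1
      linear_combination h1 + h0
    have E := congrArg (Nat.cast : ℕ → ZMod p) key
    push_cast at E
    rw [hcast, ihv] at E
    have hne : ((j : ZMod p) + 1) ≠ 0 := by
      have hnd : ¬ p ∣ (j + 1) := Nat.not_dvd_of_pos_of_lt (by omega) (by omega)
      have h2 := (ZMod.natCast_eq_zero_iff (j + 1) p).not.mpr hnd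
      push_cast at h2
      exact h2
    have hfin : (((p - 2).choose (j + 1) : ℕ) : ZMod p) * ((j : ZMod p) + 1)
        = ((-1) ^ (j + 1) * ((j : ZMod p) + 1 + 1)) * ((j : ZMod p) + 1) := by
      push_cast
      linear_combination E
    have := mul_right_cancel₀ hne hfin
    push_cast
    linear_combination this

theorem stmt_16 (p : ℕ) (hp : p.Prime) (hp3 : 3 < p) (hp1 : p % 3 = 1) :
    (((2 * p - 2).choose ((2 * p - 2) / 3) : ℤ) * ((p + (4 * p - 4) / 3).choose (2 * p - 1) : ℤ))
      ≡ -2 * p [ZMOD (p : ℤ) ^ 2] := by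
  haveI := Fact.mk hp
  set k := p / 3 with hkdef
  have hk : p = 3 * k + 1 := by omega
  have hk1 : 1 ≤ k := by omega
  have e1 : 2 * p - 2 = 6 * k := by omega
  have e2 : (2 * p - 2) / 3 = 2 * k := by omega
  have e3 : p + (4 * p - 4) / 3 = 7 * k + 1 := by omega
  have e4 : 2 * p - 1 = 6 * k + 1 := by omega
  rw [e2, e1, e3, e4]
  -- symmetry of the second binomial coefficient
  have hsym : (7 * k + 1).choose (6 * k + 1) = (7 * k + 1).choose k := by
    rw [← Nat.choose_symm (show k ≤ 7 * k + 1 by omega)]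
    congr 1
    omega
  rw [hsym]
  set m := k - 1 with hmdef
  have hkm : k = m + 1 := by omega
  -- Step 1 : k! * C(7k+1, k) = ∏_{i<k} (2p + i)
  have h1 : (k ! : ℤ) * ((7 * k + 1).choose k : ℤ) = ∏ i ∈ range k, (2 * (p : ℤ) + i) := by
    have hnat : k ! * (7 * k + 1).choose k = ∏ i ∈ range k, (2 * p + i) := by
      have := Nat.ascFactorial_eq_factorial_mul_choose (6 * k + 1) k
      rw [aux_asc_prod] at this
      have h62 : 6 * k + 1 + k = 7 * k + 1 := by omega
      rw [h62] at this
      rw [← this]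
      apply Finset.prod_congr rfl
      intro i _
      omega
    have := congrArg (Nat.cast : ℕ → ℤ) hnat
    push_cast at this
    exact this
  -- Step 2 : ∏_{i<k} (2p + i) ≡ 2p * m! [ZMOD p^2]
  have h2 : (∏ i ∈ range k, (2 * (p : ℤ) + i)) ≡ 2 * (p : ℤ) * (m ! : ℤ) [ZMOD (p : ℤ) ^ 2] := by
    rw [hkm, Finset.prod_range_succ']
    have hQ : (∏ i ∈ range m, (2 * (p : ℤ) + (i + 1))) ≡ (m ! : ℤ) [ZMOD (p : ℤ)] := by
      have hmod : ((p : ℤ) : ℤ) = ((p : ℕ) : ℤ) := rfl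
      rw [show ((p : ℕ) : ℤ) = (((p : ℕ) : ℤ)) from rfl, ← ZMod.intCast_eq_intCast_iff]
      push_cast
      rw [← Finset.prod_range_add_one_eq_factorial]
      push_cast
      apply Finset.prod_congr rfl
      intro i _
      simp [ZMod.natCast_self]
    have h2' := hQ.mul_left' (c := 2 * (p : ℤ))
    have hdvd : ((p : ℤ) ^ 2) ∣ (2 * (p : ℤ)) * (p : ℤ) := ⟨2, by ring⟩
    have h2'' := (h2'.of_dvd hdvd)
    calc (∏ i ∈ range m, (2 * (p : ℤ) + (↑i + 1))) * (2 * (p : ℤ) + (0 : ℕ))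
        = 2 * (p : ℤ) * (∏ i ∈ range m, (2 * (p : ℤ) + (i + 1))) := by push_cast; ring
      _ ≡ 2 * (p : ℤ) * (m ! : ℤ) [ZMOD (p : ℤ) ^ 2] := h2''
  -- Step 3 : C(6k, 2k) ≡ -k [ZMOD p]
  have hA : (((6 * k).choose (2 * k) : ℕ) : ZMod p) = -(k : ZMod p) := by
    have h6 : 6 * k = p + (p - 2) := by omega
    rw [h6, Nat.add_choose_eq]
    push_cast
    rw [Finset.sum_eq_single_of_mem ((0 : ℕ), 2 * k)
        (by simp [Finset.mem_antidiagonal])]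
    · rw [Nat.choose_zero_right]
      rw [aux_choose_p_sub_two p hp (2 * k) (by omega)]
      have h0 : ((3 * k + 1 : ℕ) : ZMod p) = 0 := by rw [← hk]; exact ZMod.natCast_self p
      push_cast at h0 ⊢
      rw [pow_mul]
      ring_nf
      linear_combination h0
    · rintro ⟨b1, b2⟩ hb hbne
      have hsum : b1 + b2 = 2 * k := Finset.HasAntidiagonal.mem_antidiagonal.mp hb
      have hb1 : b1 ≠ 0 := by
        rintro rfl
        exact hbne (by simp; omega)
      have hdvd : p ∣ p.choose b1 := hp.dvd_choose_self hb1 (by omega)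
      have : ((p.choose b1 : ℕ) : ZMod p) = 0 :=
        (ZMod.natCast_eq_zero_iff _ _).mpr hdvd
      simp [this]
  have h3 : ((6 * k).choose (2 * k) : ℤ) ≡ -(k : ℤ) [ZMOD (p : ℤ)] := by
    have : (((6 * k).choose (2 * k) : ℤ) : ZMod p) = ((-(k : ℤ) : ℤ) : ZMod p) := by
      push_cast
      exact hA
    exact (ZMod.intCast_eq_intCast_iff _ _ _).mp this
  -- Combine
  set A : ℤ := ((6 * k).choose (2 * k) : ℤ)
  set B : ℤ := ((7 * k + 1).choose k : ℤ)
  have hfs : (k ! : ℤ) = (k : ℤ) * (m ! : ℤ) := by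
    rw [hkm, Nat.factorial_succ]
    push_cast
    ring
  have hmain : (k ! : ℤ) * (A * B) ≡ (k ! : ℤ) * (-2 * p) [ZMOD (p : ℤ) ^ 2] := by
    have c1 : (k ! : ℤ) * (A * B) = A * ((k ! : ℤ) * B) := by ring
    rw [c1, h1]
    have c3 := h2.mul_left A
    have h4 := h3.mul_left' (c := 2 * (p : ℤ) * (m ! : ℤ))
    have hdvd : ((p : ℤ) ^ 2) ∣ (2 * (p : ℤ) * (m ! : ℤ)) * (p : ℤ) := ⟨2 * (m ! : ℤ), by ring⟩
    have h4' := h4.of_dvd hdvd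
    calc A * ∏ i ∈ range k, (2 * (p : ℤ) + i)
        ≡ A * (2 * (p : ℤ) * (m ! : ℤ)) [ZMOD (p : ℤ) ^ 2] := c3
      _ = 2 * (p : ℤ) * (m ! : ℤ) * A := by ring
      _ ≡ 2 * (p : ℤ) * (m ! : ℤ) * (-(k : ℤ)) [ZMOD (p : ℤ) ^ 2] := h4'
      _ = (k ! : ℤ) * (-2 * p) := by rw [hfs]; ring
  -- cancel k!
  have hpk : ¬ p ∣ k ! := fun h => absurd ((Nat.Prime.dvd_factorial hp).mp h) (by omega)
  have hcop : Nat.Coprime p (k !) := (Nat.Prime.coprime_iff_not_dvd hp).mpr hpk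
  have hcop2 : Nat.Coprime (p ^ 2) (k !) := hcop.pow_left 2
  have hgcd : Int.gcd ((p : ℤ) ^ 2) ((k ! : ℕ) : ℤ) = 1 := by
    have hc : ((p : ℤ) ^ 2) = ((p ^ 2 : ℕ) : ℤ) := by push_cast; ring
    rw [hc, Int.gcd_natCast_natCast]
    exact hcop2
  have hpos : (0 : ℤ) < (p : ℤ) ^ 2 := by positivity
  have hfin := Int.ModEq.cancel_left_div_gcd hpos hmain
  rw [hgcd] at hfin
  simpa using hfin
end
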